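/- Fix β ≥ 0 and call a job large if its size exceeds β and small otherwise. Suppose the number k̃ of large jobs satisfies k̃ < m. For a fixed arrival order and each 0 ≤ i ≤ k̃, let S_i be the total size of the small jobs that are preceded in the order by exactly i large jobs. Then every greedy schedule for this order has minimum load at least min{ Σ_{i=0}^{k̃} S_i/(m−i) − β , β }. -/

import Mathlib

open Finset

noncomputable section

/-- Load of machine `M` under schedule `f` (job `i` has size `p i`). -/
def mcLoad {n m : ℕ} (p : Fin n → ℝ) (f : Fin n → Fin m) (M : Fin m) : ℝ :=
  ∑ i ∈ Finset.univ.filter (fun i => f i = M), p i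

/-- Minimum load of a schedule. -/
def minLoad {n m : ℕ} (p : Fin n → ℝ) (f : Fin n → Fin m) : ℝ :=
  ⨅ M : Fin m, mcLoad p f M

/-- Load on machine `M` coming from arrival positions `< t`, where `σ` is the arrival
order (the job arriving at position `j` is `σ j`) and `g j` is the machine receiving the
job arriving at position `j`. -/
def prefLoad {n m : ℕ} (p : Fin n → ℝ) (σ : Equiv.Perm (Fin n))
    (g : Fin n → Fin m) (t : Fin n) (M : Fin m) : ℝ :=
  ∑ j ∈ Finset.univ.filter (fun j => j < t ∧ g j = M), p (σ j)

/-- `g` is a greedy schedule for the arrival order `σ`: every arriving job is placed on a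
machine whose current load is minimal. -/
def IsGreedy {n m : ℕ} (p : Fin n → ℝ) (σ : Equiv.Perm (Fin n)) (g : Fin n → Fin m) : Prop :=
  ∀ t : Fin n, ∀ M : Fin m, prefLoad p σ g t (g t) ≤ prefLoad p σ g t M

/-- The `i`-th largest job size (1-indexed), with `nthLargest p i = 0` for `i > n`. -/
def nthLargest {n : ℕ} (p : Fin n → ℝ) (i : ℕ) : ℝ :=
  ((List.ofFn p).mergeSort (fun a b => decide (b ≤ a))).getD (i - 1) 0

end



section defs
variable {n m : ℕ} (p : Fin n → ℝ) (σ : Equiv.Perm (Fin n)) (g : Fin n → Fin m) (β : ℝ)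

noncomputable def plN (t : ℕ) (M : Fin m) : ℝ :=
  ∑ j ∈ Finset.univ.filter (fun j : Fin n => j.val < t ∧ g j = M), p (σ j)

noncomputable def cntN (t : ℕ) : ℕ :=
  (Finset.univ.filter (fun j : Fin n => j.val < t ∧ β < p (σ j))).card

noncomputable def LMs (t : ℕ) : Finset (Fin m) :=
  Finset.univ.filter (fun M => ∃ j : Fin n, j.val < t ∧ g j = M ∧ β < p (σ j))
end defs

section lems
variable {n m : ℕ} (p : Fin n → ℝ) (σ : Equiv.Perm (Fin n)) (g : Fin n → Fin m) (β : ℝ)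

lemma filter_succ_split (P : Fin n → Prop) [DecidablePred P] {t : ℕ} (ht : t < n) :
    Finset.univ.filter (fun j : Fin n => j.val < t + 1 ∧ P j)
      = if P ⟨t, ht⟩ then insert ⟨t, ht⟩ (Finset.univ.filter (fun j : Fin n => j.val < t ∧ P j))
        else Finset.univ.filter (fun j : Fin n => j.val < t ∧ P j) := by
  split_ifs with h
  · ext j
    simp only [mem_insert, mem_filter, mem_univ, true_and]
    constructor
    · rintro ⟨h1, h2⟩
      rcases Nat.lt_succ_iff_lt_or_eq.mp h1 with h1 | h1
      · exact Or.inr ⟨h1, h2⟩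
      · exact Or.inl (Fin.ext h1)
    · rintro (rfl | ⟨h1, h2⟩)
      · exact ⟨Nat.lt_succ_self t, h⟩
      · exact ⟨Nat.lt_succ_of_lt h1, h2⟩
  · ext j
    simp only [mem_filter, mem_univ, true_and]
    constructor
    · rintro ⟨h1, h2⟩
      rcases Nat.lt_succ_iff_lt_or_eq.mp h1 with h1 | h1
      · exact ⟨h1, h2⟩
      · have hj : j = ⟨t, ht⟩ := Fin.ext h1
        subst hj; exact absurd h2 h
    · rintro ⟨h1, h2⟩; exact ⟨Nat.lt_succ_of_lt h1, h2⟩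

lemma not_mem_t {t : ℕ} (ht : t < n) (P : Fin n → Prop) [DecidablePred P] :
    (⟨t, ht⟩ : Fin n) ∉ Finset.univ.filter (fun j : Fin n => j.val < t ∧ P j) := by
  simp

lemma cntN_succ {t : ℕ} (ht : t < n) :
    cntN p σ β (t + 1)
      = if β < p (σ ⟨t, ht⟩) then cntN p σ β t + 1 else cntN p σ β t := by
  unfold cntN
  rw [filter_succ_split (fun j => β < p (σ j)) ht]
  split_ifs with h
  · rw [Finset.card_insert_of_notMem (not_mem_t ht _)]
  · rfl

lemma LMs_succ {t : ℕ} (ht : t < n) :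
    LMs p σ g β (t + 1)
      = if β < p (σ ⟨t, ht⟩) then insert (g ⟨t, ht⟩) (LMs p σ g β t)
        else LMs p σ g β t := by
  split_ifs with h
  · ext M
    simp only [LMs, mem_insert, mem_filter, mem_univ, true_and]
    constructor
    · rintro ⟨j, hj1, hj2, hj3⟩
      rcases Nat.lt_succ_iff_lt_or_eq.mp hj1 with h1 | h1
      · exact Or.inr ⟨j, h1, hj2, hj3⟩
      · have hj : j = ⟨t, ht⟩ := Fin.ext h1
        subst hj; exact Or.inl hj2.symm
    · rintro (rfl | ⟨j, hj1, hj2, hj3⟩)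
      · exact ⟨⟨t, ht⟩, Nat.lt_succ_self t, rfl, h⟩
      · exact ⟨j, Nat.lt_succ_of_lt hj1, hj2, hj3⟩
  · ext M
    simp only [LMs, mem_filter, mem_univ, true_and]
    constructor
    · rintro ⟨j, hj1, hj2, hj3⟩
      rcases Nat.lt_succ_iff_lt_or_eq.mp hj1 with h1 | h1
      · exact ⟨j, h1, hj2, hj3⟩
      · have hj : j = ⟨t, ht⟩ := Fin.ext h1
        subst hj; exact absurd hj3 h
    · rintro ⟨j, hj1, hj2, hj3⟩; exact ⟨j, Nat.lt_succ_of_lt hj1, hj2, hj3⟩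

lemma LMs_load (hp : ∀ i, 0 ≤ p i) {t : ℕ} {M : Fin m} (hM : M ∈ LMs p σ g β t) :
    β < plN p σ g t M := by
  simp only [LMs, mem_filter, mem_univ, true_and] at hM
  obtain ⟨j, hj1, hj2, hj3⟩ := hM
  refine lt_of_lt_of_le hj3 ?_
  exact Finset.single_le_sum (f := fun j => p (σ j)) (fun i _ => hp (σ i))
    (mem_filter.mpr ⟨mem_univ _, hj1, hj2⟩)

end lems

section invsec
variable {n m : ℕ} (p : Fin n → ℝ) (σ : Equiv.Perm (Fin n)) (g : Fin n → Fin m) (β : ℝ)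

lemma plN_nonneg (hp : ∀ i, 0 ≤ p i) (t : ℕ) (M : Fin m) : 0 ≤ plN p σ g t M :=
  Finset.sum_nonneg fun j _ => hp (σ j)

lemma plN_mono (hp : ∀ i, 0 ≤ p i) {t t' : ℕ} (h : t ≤ t') (M : Fin m) :
    plN p σ g t M ≤ plN p σ g t' M := by
  apply Finset.sum_le_sum_of_subset_of_nonneg
  · intro j hj
    simp only [mem_filter, mem_univ, true_and] at hj ⊢
    exact ⟨lt_of_lt_of_le hj.1 h, hj.2⟩
  · intro j _ _; exact hp (σ j)

lemma plN_succ {t : ℕ} (ht : t < n) (M : Fin m) :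
    plN p σ g (t + 1) M = plN p σ g t M + (if g ⟨t, ht⟩ = M then p (σ ⟨t, ht⟩) else 0) := by
  classical
  unfold plN
  rw [filter_succ_split (fun j => g j = M) ht]
  split_ifs with h
  · rw [Finset.sum_insert (not_mem_t ht _)]
    ring
  · rw [add_zero]

lemma prefLoad_eq (t : Fin n) (M : Fin m) :
    prefLoad p σ g t M = plN p σ g t.val M := rfl

lemma cntN_mono {t t' : ℕ} (h : t ≤ t') : cntN p σ β t ≤ cntN p σ β t' := by
  apply Finset.card_le_card
  intro j hj
  simp only [mem_filter, mem_univ, true_and] at hj ⊢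
  exact ⟨lt_of_lt_of_le hj.1 h, hj.2⟩

/-- The key invariant, proved by induction on time. -/
lemma invariant (hp : ∀ i, 0 ≤ p i) (hg : IsGreedy p σ g) (Mstar : Fin m)
    (hLβ : plN p σ g n Mstar < β)
    (hcm : ∀ t, cntN p σ β t < m) (t : ℕ) :
    (LMs p σ g β t).card = cntN p σ β t ∧
    ∑ j ∈ Finset.univ.filter (fun j : Fin n => j.val < t ∧ p (σ j) ≤ β),
        p (σ j) / ((m : ℝ) - cntN p σ β j.val)
      ≤ (∑ M ∈ (LMs p σ g β t)ᶜ, plN p σ g t M) / ((m : ℝ) - cntN p σ β t) := by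
  classical
  induction t with
  | zero =>
    constructor
    · simp [LMs, cntN]
    · simp [LMs, cntN, plN]
  | succ t ih =>
    rcases le_or_gt n t with hn | ht
    · -- no job arrives at time t
      have h1 : ∀ (P : Fin n → Prop) (_ : DecidablePred P),
          Finset.univ.filter (fun j : Fin n => j.val < t + 1 ∧ P j)
            = Finset.univ.filter (fun j : Fin n => j.val < t ∧ P j) := by
        intro P _
        ext j
        have : j.val < t := lt_of_lt_of_le j.isLt hn
        simp [this, Nat.lt_succ_of_lt this, this.le]
      have hLM : LMs p σ g β (t + 1) = LMs p σ g β t := by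
        unfold LMs
        ext M
        simp only [mem_filter, mem_univ, true_and]
        constructor
        · rintro ⟨j, _, hj2, hj3⟩
          exact ⟨j, lt_of_lt_of_le j.isLt hn, hj2, hj3⟩
        · rintro ⟨j, _, hj2, hj3⟩
          exact ⟨j, lt_of_lt_of_le j.isLt (Nat.le_succ_of_le hn), hj2, hj3⟩
      have hcnt : cntN p σ β (t + 1) = cntN p σ β t := by
        unfold cntN; rw [h1 _ _]
      have hpl : ∀ M, plN p σ g (t + 1) M = plN p σ g t M := by
        intro M; unfold plN; rw [h1 _ _]
      constructor
      · rw [hLM, hcnt]; exact ih.1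
      · rw [hcnt, hLM, h1 _ _]
        calc _ ≤ _ := ih.2
        _ = _ := by
          congr 1
          exact (Finset.sum_congr rfl fun M _ => (hpl M).symm)
    · -- job ⟨t, ht⟩ arrives
      obtain ⟨hcard, hsum⟩ := ih
      set j₀ : Fin n := ⟨t, ht⟩ with hj₀
      set N := g j₀ with hNdef
      have hcmt : cntN p σ β t < m := hcm t
      have hc0 : (0 : ℝ) < (m : ℝ) - cntN p σ β t := by
        have : (cntN p σ β t : ℝ) < (m : ℝ) := by exact_mod_cast hcmt
        linarith
      have hgr : ∀ M, plN p σ g t N ≤ plN p σ g t M := by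
        intro M
        have h := hg j₀ M
        rwa [prefLoad_eq, prefLoad_eq] at h
      have hNload : plN p σ g t N < β := by
        calc plN p σ g t N ≤ plN p σ g t Mstar := hgr Mstar
        _ ≤ plN p σ g n Mstar := plN_mono p σ g hp (le_of_lt ht) Mstar
        _ < β := hLβ
      have hNnot : N ∉ LMs p σ g β t := fun hmem =>
        absurd (LMs_load p σ g β hp hmem) (not_lt.mpr hNload.le)
      have hcardc : ((LMs p σ g β t)ᶜ).card = m - cntN p σ β t := by
        rw [Finset.card_compl, hcard, Fintype.card_fin]
      by_cases hbig : β < p (σ j₀)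
      · -- large job
        have hcnt1 : cntN p σ β (t + 1) = cntN p σ β t + 1 := by
          rw [cntN_succ p σ β ht, if_pos hbig]
        have hLM1 : LMs p σ g β (t + 1) = insert N (LMs p σ g β t) := by
          rw [LMs_succ p σ g β ht, if_pos hbig]
        have hc1 : (0 : ℝ) < (m : ℝ) - cntN p σ β (t + 1) := by
          have : cntN p σ β (t + 1) < m := hcm (t + 1)
          have : (cntN p σ β (t + 1) : ℝ) < (m : ℝ) := by exact_mod_cast this
          linarith
      -- card part
        have hcardnew : (LMs p σ g β (t + 1)).card = cntN p σ β (t + 1) := by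
          rw [hLM1, Finset.card_insert_of_notMem hNnot, hcard, hcnt1]
        refine ⟨hcardnew, ?_⟩
        -- small-job sum unchanged
        have hlhs : Finset.univ.filter (fun j : Fin n => j.val < t + 1 ∧ p (σ j) ≤ β)
            = Finset.univ.filter (fun j : Fin n => j.val < t ∧ p (σ j) ≤ β) := by
          rw [filter_succ_split (fun j => p (σ j) ≤ β) ht, if_neg (not_le.mpr hbig)]
        rw [hlhs]
        -- new machine sum
        have hT1 : ∑ M ∈ (LMs p σ g β (t + 1))ᶜ, plN p σ g (t + 1) M
            = (∑ M ∈ (LMs p σ g β t)ᶜ, plN p σ g t M) - plN p σ g t N := by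
          rw [hLM1, Finset.compl_insert]
          rw [Finset.sum_congr rfl (fun M hM => ?_), Finset.sum_erase_eq_sub
            (Finset.mem_compl.mpr hNnot)]
          rw [plN_succ p σ g ht M, if_neg, add_zero]
          exact fun h => (Finset.mem_erase.mp hM).1 h.symm
        rw [hT1]
        set T := ∑ M ∈ (LMs p σ g β t)ᶜ, plN p σ g t M with hTdef
        set x := plN p σ g t N with hxdef
        have hkey : ((m : ℝ) - cntN p σ β t) * x ≤ T := by
          have h1 : ((LMs p σ g β t)ᶜ).card • x ≤ T :=
            Finset.card_nsmul_le_sum _ _ _ (fun M _ => hgr M)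
          rw [hcardc] at h1
          have h2 : ((m - cntN p σ β t : ℕ) : ℝ) = (m : ℝ) - cntN p σ β t := by
            rw [Nat.cast_sub hcmt.le]
          rw [nsmul_eq_mul, h2] at h1
          exact h1
        have hfinal : T / ((m : ℝ) - cntN p σ β t) ≤ (T - x) / ((m : ℝ) - cntN p σ β (t + 1)) := by
          rw [div_le_div_iff₀ hc0 hc1, hcnt1]
          push_cast
          nlinarith [hc0.le]
        exact le_trans hsum hfinal
      · -- small job
        have hsmall : p (σ j₀) ≤ β := not_lt.mp hbig
        have hcnt1 : cntN p σ β (t + 1) = cntN p σ β t := by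
          rw [cntN_succ p σ β ht, if_neg hbig]
        have hLM1 : LMs p σ g β (t + 1) = LMs p σ g β t := by
          rw [LMs_succ p σ g β ht, if_neg hbig]
        refine ⟨by rw [hLM1, hcnt1]; exact hcard, ?_⟩
        have hlhs : ∑ j ∈ Finset.univ.filter (fun j : Fin n => j.val < t + 1 ∧ p (σ j) ≤ β),
              p (σ j) / ((m : ℝ) - cntN p σ β j.val)
            = (∑ j ∈ Finset.univ.filter (fun j : Fin n => j.val < t ∧ p (σ j) ≤ β),
              p (σ j) / ((m : ℝ) - cntN p σ β j.val))
              + p (σ j₀) / ((m : ℝ) - cntN p σ β t) := by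
          rw [filter_succ_split (fun j => p (σ j) ≤ β) ht, if_pos hsmall,
            Finset.sum_insert (not_mem_t ht _)]
          ring
        have hT1 : ∑ M ∈ (LMs p σ g β (t + 1))ᶜ, plN p σ g (t + 1) M
            = (∑ M ∈ (LMs p σ g β t)ᶜ, plN p σ g t M) + p (σ j₀) := by
          rw [hLM1]
          rw [Finset.sum_congr rfl (fun M _ => plN_succ p σ g ht M), Finset.sum_add_distrib]
          congr 1
          rw [Finset.sum_ite_eq (LMs p σ g β t)ᶜ N (fun _ => p (σ j₀)),
            if_pos (Finset.mem_compl.mpr hNnot)]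
        rw [hlhs, hT1, hcnt1, add_div]
        exact add_le_add hsum le_rfl

end invsec

section finsec
variable {n m : ℕ} (p : Fin n → ℝ) (σ : Equiv.Perm (Fin n)) (g : Fin n → Fin m) (β : ℝ)

lemma mcLoad_eq (M : Fin m) :
    mcLoad p (fun i => g (σ.symm i)) M = plN p σ g n M := by
  unfold mcLoad plN
  apply Finset.sum_equiv σ.symm
  · intro i
    simp [Fin.isLt]
  · intro i _
    simp

lemma small_machine_bound (hp : ∀ i, 0 ≤ p i) (hβ : 0 ≤ β) (hg : IsGreedy p σ g)
    (Mstar : Fin m) {M : Fin m} (hM : M ∉ LMs p σ g β n) :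
    plN p σ g n M ≤ plN p σ g n Mstar + β := by
  classical
  have hall : ∀ j : Fin n, g j = M → p (σ j) ≤ β := by
    intro j hj
    by_contra h
    exact hM (mem_filter.mpr ⟨mem_univ _, ⟨j, j.isLt, hj, not_le.mp h⟩⟩)
  rcases (Finset.univ.filter (fun j : Fin n => g j = M)).eq_empty_or_nonempty with he | hne
  · have h0 : plN p σ g n M = 0 := by
      unfold plN
      have : Finset.univ.filter (fun j : Fin n => j.val < n ∧ g j = M)
          = Finset.univ.filter (fun j : Fin n => g j = M) := by
        ext j; simp [j.isLt]
      rw [this, he, Finset.sum_empty]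
    rw [h0]
    have := plN_nonneg p σ g hp n Mstar
    linarith
  · obtain ⟨j₁, hj₁mem, hj₁max⟩ := Finset.exists_max_image _ Fin.val hne
    have hgj₁ : g j₁ = M := (mem_filter.mp hj₁mem).2
    have h1 : plN p σ g n M = plN p σ g (j₁.val + 1) M := by
      unfold plN
      congr 1
      ext j
      simp only [mem_filter, mem_univ, true_and]
      constructor
      · rintro ⟨_, h2⟩
        exact ⟨Nat.lt_succ_of_le (hj₁max j (mem_filter.mpr ⟨mem_univ _, h2⟩)), h2⟩
      · rintro ⟨_, h2⟩
        exact ⟨j.isLt, h2⟩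
    have h2 : plN p σ g j₁.val M ≤ plN p σ g n Mstar := by
      have h3 := hg j₁ Mstar
      rw [prefLoad_eq, prefLoad_eq] at h3
      calc plN p σ g j₁.val M = plN p σ g j₁.val (g j₁) := by rw [hgj₁]
      _ ≤ plN p σ g j₁.val Mstar := h3
      _ ≤ plN p σ g n Mstar := plN_mono p σ g hp j₁.isLt.le Mstar
    rw [h1, plN_succ p σ g j₁.isLt M]
    simp only [Fin.eta]
    rw [if_pos hgj₁]
    have := hall j₁ hgj₁
    linarith

end finsec

/-- Fix `β ≥ 0`; a job is large if its size exceeds `β`, small otherwise.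
If the number `k̃` of large jobs satisfies `k̃ < m` then, for a fixed arrival order and
`S_i` the total size of small jobs preceded by exactly `i` large jobs, every greedy
schedule has minimum load at least `min (Σ_{i=0}^{k̃} S_i/(m−i) − β) β`. -/
theorem stmt2 {n m : ℕ} (hm : 1 ≤ m) (p : Fin n → ℝ) (hp : ∀ i, 0 ≤ p i)
    (β : ℝ) (hβ : 0 ≤ β)
    (ktilde : ℕ) (hkt : ktilde = (Finset.univ.filter (fun i => β < p i)).card)
    (hkm : ktilde < m)
    (σ : Equiv.Perm (Fin n)) (g : Fin n → Fin m) (hg : IsGreedy p σ g)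
    (S : ℕ → ℝ)
    (hS : ∀ i, S i = ∑ j ∈ Finset.univ.filter (fun j : Fin n =>
        p (σ j) ≤ β ∧
        (Finset.univ.filter (fun j' : Fin n => j' < j ∧ β < p (σ j'))).card = i), p (σ j)) :
    min ((∑ i ∈ Finset.range (ktilde + 1), S i / ((m : ℝ) - i)) - β) β
      ≤ minLoad p (fun i => g (σ.symm i)) := by
  classical
  have hmpos : 0 < m := hm
  -- cntN at time n equals ktilde
  have hcntn : cntN p σ β n = ktilde := by
    unfold cntN
    have h1 : Finset.univ.filter (fun j : Fin n => j.val < n ∧ β < p (σ j))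
        = Finset.univ.filter (fun j : Fin n => β < p (σ j)) := by
      ext j; simp [j.isLt]
    rw [h1, hkt]
    apply Finset.card_equiv σ
    intro j
    simp
  have hcm : ∀ t, cntN p σ β t < m := by
    intro t
    rcases le_or_gt t n with h | h
    · exact lt_of_le_of_lt (by rw [← hcntn]; exact cntN_mono p σ β h) hkm
    · exact lt_of_le_of_lt (by rw [← hcntn]; exact le_of_eq (by
        unfold cntN
        congr 1
        ext j
        simp only [mem_filter, mem_univ, true_and, and_congr_left_iff]
        intro _
        exact iff_of_true (lt_of_lt_of_le j.isLt h.le) j.isLt)) hkm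
  -- choose a machine of minimum final load
  obtain ⟨Mstar, _, hmin⟩ := Finset.exists_min_image (Finset.univ : Finset (Fin m))
    (fun M => plN p σ g n M) ⟨⟨0, hmpos⟩, mem_univ _⟩
  set L := plN p σ g n Mstar with hLdef
  have hminL : ∀ M, L ≤ plN p σ g n M := fun M => hmin M (mem_univ M)
  haveI : Nonempty (Fin m) := ⟨⟨0, hmpos⟩⟩
  suffices h : min ((∑ i ∈ Finset.range (ktilde + 1), S i / ((m : ℝ) - i)) - β) β ≤ L by
    unfold minLoad
    apply le_ciInf
    intro M
    rw [mcLoad_eq p σ g M]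
    exact le_trans h (hminL M)
  rcases le_or_gt β L with hcase | hcase
  · exact le_trans (min_le_right _ _) hcase
  · refine le_trans (min_le_left _ _) ?_
    rw [sub_le_iff_le_add]
    -- rewrite the sum fiberwise
    have hfib : ∑ i ∈ Finset.range (ktilde + 1), S i / ((m : ℝ) - i)
        = ∑ j ∈ Finset.univ.filter (fun j : Fin n => p (σ j) ≤ β),
            p (σ j) / ((m : ℝ) - cntN p σ β j.val) := by
      rw [← Finset.sum_fiberwise_of_maps_to (g := fun j : Fin n => cntN p σ β j.val)
        (t := Finset.range (ktilde + 1)) (fun j _ => Finset.mem_range.mpr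
          (Nat.lt_succ_of_le (by rw [← hcntn]; exact cntN_mono p σ β j.isLt.le)))]
      apply Finset.sum_congr rfl
      intro i _
      rw [hS i, Finset.sum_div]
      rw [Finset.filter_filter]
      have hset : Finset.univ.filter (fun j : Fin n => p (σ j) ≤ β ∧ cntN p σ β j.val = i)
          = Finset.univ.filter (fun j : Fin n => p (σ j) ≤ β ∧
              (Finset.univ.filter (fun j' : Fin n => j' < j ∧ β < p (σ j'))).card = i) := by
        apply Finset.filter_congr
        intro j _
        have : cntN p σ β j.val
            = (Finset.univ.filter (fun j' : Fin n => j' < j ∧ β < p (σ j'))).card := rfl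
        rw [this]
      rw [hset]
      apply Finset.sum_congr rfl
      intro j hj
      have hcj : cntN p σ β j.val = i := by
        simp only [mem_filter] at hj
        have : (Finset.univ.filter (fun j' : Fin n => j' < j ∧ β < p (σ j'))).card = i :=
          hj.2.2
        exact this
      rw [hcj]
    rw [hfib]
    obtain ⟨hcard, hsum⟩ := invariant p σ g β hp hg Mstar hcase hcm n
    have hlhs : Finset.univ.filter (fun j : Fin n => j.val < n ∧ p (σ j) ≤ β)
        = Finset.univ.filter (fun j : Fin n => p (σ j) ≤ β) := by
      ext j; simp [j.isLt]
    rw [hlhs, hcntn] at hsum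
    -- bound the total small-machine load
    have hcardc : (((LMs p σ g β n)ᶜ).card : ℝ) = (m : ℝ) - ktilde := by
      rw [Finset.card_compl, hcard, hcntn, Fintype.card_fin, Nat.cast_sub hkm.le]
    have hc : (0 : ℝ) < (m : ℝ) - ktilde := by
      have : (ktilde : ℝ) < (m : ℝ) := by exact_mod_cast hkm
      linarith
    have hT : ∑ M ∈ (LMs p σ g β n)ᶜ, plN p σ g n M ≤ ((m : ℝ) - ktilde) * (L + β) := by
      have h1 : ∑ M ∈ (LMs p σ g β n)ᶜ, plN p σ g n M
          ≤ ((LMs p σ g β n)ᶜ).card • (L + β) :=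
        Finset.sum_le_card_nsmul _ _ _ (fun M hM =>
          small_machine_bound p σ g β hp hβ hg Mstar (Finset.mem_compl.mp hM))
      rw [nsmul_eq_mul, hcardc] at h1
      exact h1
    calc ∑ j ∈ Finset.univ.filter (fun j : Fin n => p (σ j) ≤ β),
          p (σ j) / ((m : ℝ) - cntN p σ β j.val)
        ≤ (∑ M ∈ (LMs p σ g β n)ᶜ, plN p σ g n M) / ((m : ℝ) - ktilde) := hsum
      _ ≤ (((m : ℝ) - ktilde) * (L + β)) / ((m : ℝ) - ktilde) :=
          div_le_div_of_nonneg_right hT hc.le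
      _ = L + β := by field_simp
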